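/- Let p be an odd prime and let s be an integer with 1 ≤ s ≤ p−1. In the ring (ℤ/pℤ)[X]/(P_p), one has: P_s^p ≡ s·1 (mod P_p) if s is odd, and P_s^p ≡ −s·P_{p−1} (mod P_p) if s is even. -/
import Mathlib


open Polynomial

/-- The Chebyshev-like polynomials `P_s ∈ ℤ[X]`: `P_0 = 0`, `P_1 = 1`,
`P_{s+2} = X·P_{s+1} − P_s` (so that `P_s(2 cos θ) = sin(sθ)/sin θ`). The Verlinde ring
`K(Ver_p)` is `ℤ[X]/(P_p)`, where the class of `P_s` is the class `[L̄_s]`. -/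
noncomputable def chebP : ℕ → Polynomial ℤ
  | 0 => 0
  | 1 => 1
  | n + 2 => X * chebP (n + 1) - chebP n

lemma chebP_add_two (n : ℕ) : chebP (n + 2) = X * chebP (n + 1) - chebP n := rfl

lemma chebP_pell : ∀ n : ℕ, chebP (n+1) ^ 2 - chebP (n+2) * chebP n = 1 := by
  intro n
  induction n with
  | zero => simp [chebP]
  | succ n ih =>
    rw [chebP_add_two (n+1), chebP_add_two n] at *
    linear_combination ih

lemma dickson_eq_chebP : ∀ n : ℕ, dickson 1 (1 : ℤ) (n+1) = chebP (n+2) - chebP n := by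
  intro n
  induction n using Nat.twoStepInduction with
  | zero => simp [dickson_one, chebP]
  | one =>
    rw [show (2:ℕ) = 0 + 2 from rfl, dickson_add_two]
    simp [dickson_zero, dickson_one, chebP]
    ring
  | more n ih1 ih2 =>
    rw [show n+2+1 = n+1+2 from rfl, dickson_add_two, ih1, ih2]
    simp only [map_one, one_mul, show n+1+2 = n+3 from rfl, show n+1+1 = n+2 from rfl,
      show n+2+2 = n+4 from rfl]
    linear_combination chebP_add_two n - chebP_add_two (n+2)

lemma chebP_comp_key (k : ℕ) : ∀ n : ℕ,
    chebP (k+1) ∣ (-chebP k) * ((chebP n).comp (dickson 1 (1:ℤ) (k+1)))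
      - (n : Polynomial ℤ) * (-chebP k) ^ n := by
  have hD : dickson 1 (1:ℤ) (k+1) = X * chebP (k+1) + 2 * (-chebP k) := by
    rw [dickson_eq_chebP k, chebP_add_two k]; ring
  have hc : (-chebP k)^2 - 1 = chebP (k+1) * (X * chebP k - chebP (k+1)) := by
    have h := chebP_pell k
    rw [chebP_add_two k] at h
    linear_combination h
  intro n
  induction n using Nat.twoStepInduction with
  | zero => simp [chebP]
  | one => simp [chebP]
  | more n ih1 ih2 =>
    obtain ⟨a, ha⟩ := ih1
    obtain ⟨b, hb⟩ := ih2
    refine ⟨(X * chebP (k+1) + 2 * (-chebP k)) * b - a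
      + X * ((n:Polynomial ℤ)+1) * (-chebP k)^(n+1)
      + (n : Polynomial ℤ) * (-chebP k)^n * (X * chebP k - chebP (k+1)), ?_⟩
    have hcomp : (chebP (n+2)).comp (dickson 1 (1:ℤ) (k+1))
        = dickson 1 (1:ℤ) (k+1) * (chebP (n+1)).comp (dickson 1 (1:ℤ) (k+1))
          - (chebP n).comp (dickson 1 (1:ℤ) (k+1)) := by
      rw [chebP_add_two n]; simp [sub_comp, mul_comp]
    rw [hcomp, hD] at *
    push_cast at ha hb ⊢
    linear_combination (X * chebP (k+1) + 2 * (-chebP k)) * hb - ha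
      + (n : Polynomial ℤ) * (-chebP k)^n * hc

lemma chebP_sq (k : ℕ) : chebP (k+1) ∣ (-chebP k)^2 - 1 := by
  refine ⟨X * chebP k - chebP (k+1), ?_⟩
  have h := chebP_pell k
  rw [chebP_add_two k] at h
  linear_combination h

lemma chebP_main (k s : ℕ) :
    (Odd s → chebP (k+1) ∣ (chebP s).comp (dickson 1 (1:ℤ) (k+1)) - (s : Polynomial ℤ))
    ∧ (Even s → chebP (k+1) ∣ (chebP s).comp (dickson 1 (1:ℤ) (k+1))
        + (s : Polynomial ℤ) * chebP k) := by
  obtain ⟨a, ha⟩ := chebP_comp_key k s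
  obtain ⟨e, he⟩ := chebP_sq k
  have h1 : chebP (k+1) ∣ (chebP s).comp (dickson 1 (1:ℤ) (k+1))
      - (s : Polynomial ℤ) * (-chebP k)^(s+1) :=
    ⟨(-chebP k) * a - e * ((chebP s).comp (dickson 1 (1:ℤ) (k+1))),
      by linear_combination (-chebP k) * ha - ((chebP s).comp (dickson 1 (1:ℤ) (k+1))) * he⟩
  obtain ⟨u, hu⟩ := h1
  constructor
  · rintro ⟨j, rfl⟩
    have h2 : chebP (k+1) ∣ ((-chebP k)^2)^(j+1) - 1^(j+1) :=
      dvd_trans ⟨e, he⟩ (sub_dvd_pow_sub_pow _ _ _)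
    rw [one_pow, ← pow_mul] at h2
    obtain ⟨v, hv⟩ := h2
    refine ⟨u + (((2*j+1 : ℕ)) : Polynomial ℤ) * v, ?_⟩
    have hpow : (2*j+1) + 1 = 2*(j+1) := by ring
    rw [hpow] at hu
    linear_combination hu + (((2*j+1 : ℕ)) : Polynomial ℤ) * hv
  · rintro ⟨j, rfl⟩
    have h2 : chebP (k+1) ∣ ((-chebP k)^2)^j - 1^j :=
      dvd_trans ⟨e, he⟩ (sub_dvd_pow_sub_pow _ _ _)
    rw [one_pow, ← pow_mul] at h2
    obtain ⟨v, hv⟩ := h2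
    refine ⟨u - (((j+j : ℕ)) : Polynomial ℤ) * (chebP k) * v, ?_⟩
    have hpow : (j + j) + 1 = 2*j + 1 := by ring
    rw [hpow, pow_succ] at hu
    linear_combination hu - (((j+j : ℕ)) : Polynomial ℤ) * (chebP k) * hv

/-- Let `p` be an odd prime and `1 ≤ s ≤ p − 1`. In the ring
`(ℤ/pℤ)[X]/(P_p)`: if `s` is odd then `P_s^p ≡ s (mod P_p)`, and if `s` is even then
`P_s^p ≡ −s·P_{p−1} (mod P_p)` (stated as divisibilities in `(ℤ/pℤ)[X]`). -/
theorem stmt12 (p : ℕ) (hp : p.Prime) (hodd : Odd p)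
    (s : ℕ) (hs1 : 1 ≤ s) (hs2 : s ≤ p - 1) :
    (Odd s →
      (chebP p).map (Int.castRingHom (ZMod p)) ∣
        ((chebP s).map (Int.castRingHom (ZMod p))) ^ p - (s : Polynomial (ZMod p)))
    ∧ (Even s →
      (chebP p).map (Int.castRingHom (ZMod p)) ∣
        ((chebP s).map (Int.castRingHom (ZMod p))) ^ p +
          (s : Polynomial (ZMod p)) * (chebP (p - 1)).map (Int.castRingHom (ZMod p))) := by
  haveI : Fact p.Prime := ⟨hp⟩
  obtain ⟨k, rfl⟩ : ∃ k, p = k + 1 := ⟨p - 1, (Nat.succ_pred_eq_of_pos hp.pos).symm⟩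
  have main := chebP_main k s
  set φ := Int.castRingHom (ZMod (k+1)) with hφ
  have hmap : ((chebP s).map φ) ^ (k+1) = ((chebP s).comp (dickson 1 (1:ℤ) (k+1))).map φ := by
    rw [Polynomial.map_comp, map_dickson, map_one, dickson_one_one_zmod_p,
      ← expand_eq_comp_X_pow, ZMod.expand_card]
  rw [Nat.add_sub_cancel]
  constructor
  · intro hodds
    have h := Polynomial.map_dvd φ (main.1 hodds)
    rw [Polynomial.map_sub, Polynomial.map_natCast, ← hmap] at h
    exact h
  · intro hevs
    have h := Polynomial.map_dvd φ (main.2 hevs)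
    rw [Polynomial.map_add, Polynomial.map_mul, Polynomial.map_natCast, ← hmap] at h
    exact h
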